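/- Two points (z₁,z₂), (w₁,w₂) ∈ ℂ² have the same values of all four invariants π₁, π₂, π₃, π₄ if and only if they lie on the same orbit of the S¹-action ρ_t(z₁,z₂) = (e^{it}z₁, e^{2it}z₂). -/

import Mathlib

lemma same_norm_orbit (w z : ℂ) (h : Complex.normSq w = Complex.normSq z) :
    ∃ t : ℝ, w = Complex.exp (t * Complex.I) * z := by
  by_cases hz : z = 0
  · refine ⟨0, ?_⟩
    have : Complex.normSq w = 0 := by simp [hz] at h ⊢; exact h
    simp [hz, Complex.normSq_eq_zero.mp this]
  · have habs : ‖w‖ = ‖z‖ := by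
      simp [Complex.norm_def, h]
    refine ⟨w.arg - z.arg, ?_⟩
    have key : Complex.exp ((↑(w.arg - z.arg)) * Complex.I) * Complex.exp (↑z.arg * Complex.I)
        = Complex.exp (↑w.arg * Complex.I) := by
      rw [← Complex.exp_add]; congr 1; push_cast; ring
    calc w = ↑(‖w‖) * Complex.exp (↑w.arg * Complex.I) :=
            (Complex.norm_mul_exp_arg_mul_I w).symm
      _ = ↑(‖z‖) * Complex.exp (↑w.arg * Complex.I) := by rw [habs]
      _ = Complex.exp ((↑(w.arg - z.arg)) * Complex.I) *
            (↑(‖z‖) * Complex.exp (↑z.arg * Complex.I)) := by rw [← key]; ring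
      _ = Complex.exp ((↑(w.arg - z.arg)) * Complex.I) * z := by
            rw [Complex.norm_mul_exp_arg_mul_I]

lemma conj_exp_two (t : ℝ) :
    (starRingEnd ℂ) (Complex.exp (2 * t * Complex.I))
      = Complex.exp (-(2 * t * Complex.I)) := by
  rw [← Complex.exp_conj]
  congr 1
  simp only [map_mul, Complex.conj_I, Complex.conj_ofReal, map_ofNat]
  ring

lemma exp_sq (t : ℝ) :
    Complex.exp ((t : ℂ) * Complex.I) ^ 2 = Complex.exp (2 * t * Complex.I) := by
  rw [← Complex.exp_nat_mul]; ring_nf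

lemma exp_cancel (t : ℝ) :
    Complex.exp (2 * (t : ℂ) * Complex.I) * Complex.exp (-(2 * t * Complex.I)) = 1 := by
  rw [← Complex.exp_add, show 2 * (t : ℂ) * Complex.I + -(2 * t * Complex.I) = 0 by ring,
    Complex.exp_zero]

theorem stmt2 (z₁ z₂ w₁ w₂ : ℂ) :
    (Complex.normSq w₁ = Complex.normSq z₁ ∧ Complex.normSq w₂ = Complex.normSq z₂ ∧
      (w₁ ^ 2 * (starRingEnd ℂ) w₂).re = (z₁ ^ 2 * (starRingEnd ℂ) z₂).re ∧
      (w₁ ^ 2 * (starRingEnd ℂ) w₂).im = (z₁ ^ 2 * (starRingEnd ℂ) z₂).im)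
    ↔ ∃ t : ℝ, w₁ = Complex.exp (t * Complex.I) * z₁ ∧
        w₂ = Complex.exp (2 * t * Complex.I) * z₂ := by
  constructor
  · rintro ⟨h1, h2, h3, h4⟩
    have hkey : w₁ ^ 2 * (starRingEnd ℂ) w₂ = z₁ ^ 2 * (starRingEnd ℂ) z₂ :=
      Complex.ext h3 h4
    by_cases hz1 : z₁ = 0
    · have hw1 : w₁ = 0 := by
        have : Complex.normSq w₁ = 0 := by simp [hz1] at h1 ⊢; exact h1
        exact Complex.normSq_eq_zero.mp this
      obtain ⟨s, hs⟩ := same_norm_orbit w₂ z₂ h2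
      refine ⟨s / 2, by simp [hw1, hz1], ?_⟩
      rw [hs]
      congr 2
      push_cast
      ring
    · obtain ⟨t, ht⟩ := same_norm_orbit w₁ z₁ h1
      refine ⟨t, ht, ?_⟩
      rw [ht] at hkey
      have hz2 : z₁ ^ 2 ≠ 0 := pow_ne_zero _ hz1
      have hc : z₁ ^ 2 * (Complex.exp (2 * (t : ℂ) * Complex.I) * (starRingEnd ℂ) w₂)
          = z₁ ^ 2 * (starRingEnd ℂ) z₂ := by
        rw [← hkey, ← exp_sq]; ring
      have hc2 := mul_left_cancel₀ hz2 hc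
      have hc3 := congrArg (starRingEnd ℂ) hc2
      simp only [map_mul, Complex.conj_conj, conj_exp_two] at hc3
      rw [← hc3, ← mul_assoc, exp_cancel, one_mul]
  · rintro ⟨t, h1, h2⟩
    subst h1 h2
    have hprod : (Complex.exp ((t : ℂ) * Complex.I) * z₁) ^ 2 *
        (starRingEnd ℂ) (Complex.exp (2 * t * Complex.I) * z₂)
        = z₁ ^ 2 * (starRingEnd ℂ) z₂ := by
      rw [map_mul, conj_exp_two, mul_pow, exp_sq,
        show Complex.exp (2 * (t:ℂ) * Complex.I) * z₁ ^ 2 *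
          (Complex.exp (-(2 * (t:ℂ) * Complex.I)) * (starRingEnd ℂ) z₂)
          = (Complex.exp (2 * (t:ℂ) * Complex.I) * Complex.exp (-(2 * (t:ℂ) * Complex.I))) *
            (z₁ ^ 2 * (starRingEnd ℂ) z₂) by ring, exp_cancel, one_mul]
    refine ⟨?_, ?_, congrArg Complex.re hprod, congrArg Complex.im hprod⟩
    · simp [Complex.normSq_mul, Complex.normSq_eq_norm_sq, Complex.norm_exp]
    · simp [Complex.normSq_mul, Complex.normSq_eq_norm_sq, Complex.norm_exp]
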